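/- Let f be S-shaped as above and let s^{wf} ∈ (sI, 1) be the unique root of f(s) = s f'(s) in (0,1). Then U^{max} = 1/f(s^{wf}) is the unique global maximum point of F(U) = −s(U)/f(s(U)) on (1,∞): F'(U) > 0 for U ∈ (1, U^{max}) and F'(U) < 0 for U ∈ (U^{max}, ∞). Moreover U^{max} < U^I = 1/f(sI). -/

import Mathlib

open Set

private lemma derivF_key (f F : ℝ → ℝ)
    (hf : ContDiff ℝ 2 f)
    (hf' : ∀ x ∈ Ioo (0:ℝ) 1, 0 < deriv f x)
    (hfpos : ∀ x ∈ Ioo (0:ℝ) 1, 0 < f x)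
    (hF : ∀ x ∈ Ioo (0:ℝ) 1, F (1 / f x) = -(x / f x))
    {s₀ : ℝ} (hs₀ : s₀ ∈ Ioo (0:ℝ) 1) :
    deriv F (1 / f s₀) = (f s₀ - s₀ * deriv f s₀) / deriv f s₀ := by
  have hfs : 0 < f s₀ := hfpos _ hs₀
  have hfs' : 0 < deriv f s₀ := hf' _ hs₀
  have hne : f s₀ ≠ 0 := hfs.ne'
  have hne' : deriv f s₀ ≠ 0 := hfs'.ne'
  have hstrict : HasStrictDerivAt f (deriv f s₀) s₀ :=
    hf.contDiffAt.hasStrictDerivAt (by norm_num)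
  set d : ℝ := -deriv f s₀ / f s₀ ^ 2 with hd
  have hφ : HasStrictDerivAt (fun x => (f x)⁻¹) d s₀ := by
    have h := (hasStrictDerivAt_inv hne).comp s₀ hstrict
    have he : -(f s₀ ^ 2)⁻¹ * deriv f s₀ = d := by rw [hd]; field_simp
    rw [he] at h
    exact h
  have hdne : d ≠ 0 := div_ne_zero (neg_ne_zero.2 hne') (pow_ne_zero _ hne)
  set g := hφ.localInverse _ d s₀ hdne with hg
  have hgd : HasStrictDerivAt g d⁻¹ ((f s₀)⁻¹) := hφ.to_localInverse hdne
  have hE := hφ.hasStrictFDerivAt_equiv hdne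
  have hright : ∀ᶠ y in nhds ((f s₀)⁻¹), (f (g y))⁻¹ = y :=
    hE.eventually_right_inverse
  have happ : g ((f s₀)⁻¹) = s₀ := hE.localInverse_apply_image
  have hcont : ContinuousAt g ((f s₀)⁻¹) := hE.localInverse_continuousAt
  have hmem : ∀ᶠ y in nhds ((f s₀)⁻¹), g y ∈ Ioo (0:ℝ) 1 :=
    hcont.eventually_mem (isOpen_Ioo.mem_nhds (by rw [happ]; exact hs₀))
  have heq : ∀ᶠ y in nhds ((f s₀)⁻¹), F y = -(g y / f (g y)) := by
    filter_upwards [hright, hmem] with y h1 h2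
    have h3 := hF (g y) h2
    rw [one_div, h1] at h3
    exact h3
  have hgd' : HasDerivAt g d⁻¹ ((f s₀)⁻¹) := hgd.hasDerivAt
  have hfg : HasDerivAt (fun y => f (g y)) (deriv f s₀ * d⁻¹) ((f s₀)⁻¹) := by
    have h2 : HasDerivAt f (deriv f s₀) (g ((f s₀)⁻¹)) := by
      rw [happ]; exact hstrict.hasDerivAt
    exact h2.comp _ hgd'
  have hdiv : HasDerivAt (fun y => g y / f (g y))
      ((d⁻¹ * f (g ((f s₀)⁻¹)) - g ((f s₀)⁻¹) * (deriv f s₀ * d⁻¹)) / f (g ((f s₀)⁻¹)) ^ 2)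
      ((f s₀)⁻¹) := by
    refine hgd'.div hfg ?_
    rw [happ]; exact hne
  rw [happ] at hdiv
  have hneg : HasDerivAt (fun y => -(g y / f (g y)))
      (-((d⁻¹ * f s₀ - s₀ * (deriv f s₀ * d⁻¹)) / f s₀ ^ 2)) ((f s₀)⁻¹) := hdiv.neg
  have hFd : HasDerivAt F (-((d⁻¹ * f s₀ - s₀ * (deriv f s₀ * d⁻¹)) / f s₀ ^ 2)) ((f s₀)⁻¹) :=
    hneg.congr_of_eventuallyEq heq
  have hval : -((d⁻¹ * f s₀ - s₀ * (deriv f s₀ * d⁻¹)) / f s₀ ^ 2)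
      = (f s₀ - s₀ * deriv f s₀) / deriv f s₀ := by
    rw [hd, inv_div]
    field_simp
    ring
  rw [one_div, ← hval]
  exact hFd.deriv

/-- U^max = 1/f(s^wf) is the unique global maximum of the Lagrange flux F:
F' > 0 on (1, U^max), F' < 0 on (U^max, ∞), and U^max < U^I = 1/f(sI). -/
theorem stmt6 (f F : ℝ → ℝ) (sI swf : ℝ)
    (hf : ContDiff ℝ 2 f) (hf0 : f 0 = 0) (hf1 : f 1 = 1)
    (hf' : ∀ x ∈ Ioo (0:ℝ) 1, 0 < deriv f x)
    (hfpos : ∀ x ∈ Ioo (0:ℝ) 1, 0 < f x)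
    (hf_lim : Filter.Tendsto f (nhdsWithin 0 (Ioi 0)) (nhds 0))
    (hsI : sI ∈ Ioo (0:ℝ) 1)
    (hconv : ∀ x ∈ Ioo (0:ℝ) sI, 0 < deriv (deriv f) x)
    (hconc : ∀ x ∈ Ioo sI 1, deriv (deriv f) x < 0)
    (hswf : swf ∈ Ioo sI 1)
    (hroot : f swf = swf * deriv f swf)
    (huniq : ∀ x ∈ Ioo (0:ℝ) 1, f x = x * deriv f x → x = swf)
    (hF : ∀ x ∈ Ioo (0:ℝ) 1, F (1 / f x) = -(x / f x)) :
    (∀ U ∈ Ioo (1:ℝ) (1 / f swf), 0 < deriv F U) ∧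
    (∀ U ∈ Ioi (1 / f swf), deriv F U < 0) ∧
    1 / f swf < 1 / f sI := by
  have hfc : Continuous f := hf.continuous
  -- ψ := f - id * f'
  set ψ : ℝ → ℝ := fun x => f x - x * deriv f x with hψ
  have hdf : Differentiable ℝ f := hf.differentiable (by norm_num)
  have hf'c : ContDiff ℝ 1 (deriv f) := by
    have h2 : ContDiff ℝ (1 + 1 : ℕ) f := by norm_num at hf ⊢; exact hf
    exact ((contDiff_succ_iff_deriv).1 h2).2.2
  have hdf' : Differentiable ℝ (deriv f) := hf'c.differentiable (by norm_num)
  have hψd : ∀ x : ℝ, HasDerivAt ψ (-(x * deriv (deriv f) x)) x := by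
    intro x
    have h1 : HasDerivAt f (deriv f x) x := (hdf x).hasDerivAt
    have h2 : HasDerivAt (deriv f) (deriv (deriv f) x) x := (hdf' x).hasDerivAt
    have h3 : HasDerivAt (fun y => y * deriv f y)
        (1 * deriv f x + x * deriv (deriv f) x) x := (hasDerivAt_id x).mul h2
    have := h1.sub h3
    rw [show deriv f x - (1 * deriv f x + x * deriv (deriv f) x) = -(x * deriv (deriv f) x) by ring] at this
    exact this
  have hψc : Continuous ψ :=
    hfc.sub (continuous_id.mul (hf.continuous_deriv (by norm_num)))
  -- ψ strictly monotone on [sI, 1], strictly antitone on [0, sI]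
  have hmonoψ : StrictMonoOn ψ (Icc sI 1) := by
    refine strictMonoOn_of_deriv_pos (convex_Icc sI 1) hψc.continuousOn ?_
    intro x hx
    rw [interior_Icc] at hx
    rw [(hψd x).deriv]
    have hx0 : 0 < x := lt_trans hsI.1 hx.1
    nlinarith [hconc x hx]
  have hantiψ : StrictAntiOn ψ (Icc 0 sI) := by
    refine strictAntiOn_of_deriv_neg (convex_Icc 0 sI) hψc.continuousOn ?_
    intro x hx
    rw [interior_Icc] at hx
    rw [(hψd x).deriv]
    nlinarith [hconv x hx, hx.1]
  have hψswf : ψ swf = 0 := by simp [hψ, hroot]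
  have hψ0 : ψ 0 = 0 := by simp [hψ, hf0]
  have hswf01 : swf ∈ Ioo (0:ℝ) 1 := ⟨lt_trans hsI.1 hswf.1, hswf.2⟩
  -- ψ > 0 on (swf, 1), ψ < 0 on (0, swf)
  have hψpos : ∀ s ∈ Ioo swf 1, 0 < ψ s := by
    intro s hs
    have := hmonoψ ⟨le_of_lt hswf.1, le_of_lt hswf.2⟩
      ⟨le_of_lt (lt_trans hswf.1 hs.1), le_of_lt hs.2⟩ hs.1
    linarith [hψswf ▸ this]
  have hψneg : ∀ s ∈ Ioo (0:ℝ) swf, ψ s < 0 := by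
    intro s hs
    rcases le_or_gt s sI with h | h
    · have := hantiψ ⟨le_rfl, le_of_lt hsI.1⟩ ⟨le_of_lt hs.1, h⟩ hs.1
      linarith [hψ0 ▸ this]
    · have := hmonoψ ⟨le_of_lt h, le_of_lt (lt_trans hs.2 hswf.2)⟩
        ⟨le_of_lt hswf.1, le_of_lt hswf.2⟩ hs.2
      linarith [hψswf ▸ this]
  -- strict monotonicity of f on [0,1]
  have hmonof : StrictMonoOn f (Icc 0 1) := by
    refine strictMonoOn_of_deriv_pos (convex_Icc 0 1) hfc.continuousOn ?_
    intro x hx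
    rw [interior_Icc] at hx
    exact hf' x hx
  have hfswf : 0 < f swf := hfpos _ hswf01
  have hfswf1 : f swf < 1 := by
    have := hmonof ⟨le_of_lt hswf01.1, le_of_lt hswf01.2⟩ ⟨zero_le_one, le_rfl⟩ hswf01.2
    rwa [hf1] at this
  -- surjectivity via IVT
  have hIVT : Ioo (0:ℝ) 1 ⊆ f '' Ioo 0 1 := by
    have := intermediate_value_Ioo (zero_le_one) hfc.continuousOn
    rwa [hf0, hf1] at this
  refine ⟨?_, ?_, ?_⟩
  · -- F' > 0 on (1, 1/f swf)
    intro U hU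
    have hU0 : (0:ℝ) < U := lt_trans zero_lt_one hU.1
    have h1U : (1:ℝ)/U ∈ Ioo (0:ℝ) 1 := by
      constructor
      · positivity
      · rw [div_lt_one hU0]; exact hU.1
    obtain ⟨s₀, hs₀, hfs₀⟩ := hIVT h1U
    have hUeq : U = 1 / f s₀ := by
      rw [hfs₀]; field_simp
    have hs₀swf : swf < s₀ := by
      by_contra h
      push_neg at h
      have hle : f s₀ ≤ f swf := by
        rcases eq_or_lt_of_le h with h' | h'
        · rw [h']
        · exact le_of_lt (hmonof ⟨le_of_lt hs₀.1, le_of_lt hs₀.2⟩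
            ⟨le_of_lt hswf01.1, le_of_lt hswf01.2⟩ h')
      have : 1 / U ≤ f swf := hfs₀ ▸ hle
      rw [div_le_iff₀ hU0] at this
      have h2 : 1 / (f swf) ≤ U := by
        rw [div_le_iff₀ hfswf]
        nlinarith
      linarith [hU.2]
    rw [hUeq, derivF_key f F hf hf' hfpos hF hs₀]
    have := hψpos s₀ ⟨hs₀swf, hs₀.2⟩
    exact div_pos (by simpa [hψ] using this) (hf' _ hs₀)
  · -- F' < 0 on (1/f swf, ∞)
    intro U hU
    rw [mem_Ioi] at hU
    have hUswf : 1 / f swf < U := hU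
    have hU0 : (0:ℝ) < U := lt_trans (by positivity) hUswf
    have h1U : (1:ℝ)/U ∈ Ioo (0:ℝ) 1 := by
      constructor
      · positivity
      · have : 1 / U < f swf := by
          rw [div_lt_iff₀ hU0]
          rw [div_lt_iff₀ hfswf] at hUswf
          nlinarith
        linarith
    obtain ⟨s₀, hs₀, hfs₀⟩ := hIVT h1U
    have hUeq : U = 1 / f s₀ := by
      rw [hfs₀]; field_simp
    have hs₀swf : s₀ < swf := by
      by_contra h
      push_neg at h
      have hle : f swf ≤ f s₀ := by
        rcases eq_or_lt_of_le h with h' | h'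
        · rw [h']
        · exact le_of_lt (hmonof ⟨le_of_lt hswf01.1, le_of_lt hswf01.2⟩
            ⟨le_of_lt hs₀.1, le_of_lt hs₀.2⟩ h')
      have h1 : f swf ≤ 1 / U := hfs₀ ▸ hle
      have : 1 / U < f swf := by
        rw [div_lt_iff₀ hU0]
        rw [div_lt_iff₀ hfswf] at hUswf
        nlinarith
      linarith
    rw [hUeq, derivF_key f F hf hf' hfpos hF hs₀]
    have := hψneg s₀ ⟨hs₀.1, hs₀swf⟩
    exact div_neg_of_neg_of_pos (by simpa [hψ] using this) (hf' _ hs₀)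
  · -- 1/f swf < 1/f sI
    have h1 : f sI < f swf :=
      hmonof ⟨le_of_lt hsI.1, le_of_lt hsI.2⟩
        ⟨le_of_lt hswf01.1, le_of_lt hswf01.2⟩ hswf.1
    have h2 : 0 < f sI := hfpos _ hsI
    exact one_div_lt_one_div_of_lt h2 h1
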